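/- Let d be an odd square-free integer, F = ℚ(√d), K = ℚ(d^{1/4}), and let α > 0 be an element of O_K \ O_F with N_{K/F}(α) = B² for some B ∈ O_F, so that the minimal polynomial of α over F is f(x) = x² - Ax + B² with A = Tr_{K/F}(α). Then there exists C ∈ O_F with C² = A + 2B or C² = A - 2B if and only if √α ∈ O_K. -/

import Mathlib

open NumberField IntermediateField

theorem sqrt_in_ring_of_integers_iff
    (d : ℤ) (hodd : Odd d) (hsf : Squarefree d)
    (t : ℝ) (ht : t ^ 4 = (d : ℝ)) (htpos : 0 < t)
    (F K : IntermediateField ℚ ℝ)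
    (hF : F = IntermediateField.adjoin ℚ {t ^ 2})
    (hK : K = IntermediateField.adjoin ℚ {t})
    (α : K) (hint : IsIntegral ℤ α) (hpos : 0 < (α : ℝ)) (hnF : (α : ℝ) ∉ F)
    (A B : F) (hA : IsIntegral ℤ A) (hB : IsIntegral ℤ B)
    (hroot : (α : ℝ) ^ 2 - (A : ℝ) * (α : ℝ) + (B : ℝ) ^ 2 = 0) :
    (∃ C : F, IsIntegral ℤ C ∧
        ((C : ℝ) ^ 2 = (A : ℝ) + 2 * (B : ℝ) ∨ (C : ℝ) ^ 2 = (A : ℝ) - 2 * (B : ℝ))) ↔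
      (Real.sqrt (α : ℝ) ∈ K ∧ IsIntegral ℤ (Real.sqrt (α : ℝ))) := by
  have htK : t ∈ K := by rw [hK]; exact mem_adjoin_simple_self ℚ t
  have ht2F : t ^ 2 ∈ F := by rw [hF]; exact mem_adjoin_simple_self ℚ (t ^ 2)
  have hFK : F ≤ K := by
    rw [hF]
    exact adjoin_le_iff.mpr (Set.singleton_subset_iff.mpr (pow_mem htK 2))
  set β : ℝ := Real.sqrt (α : ℝ) with hβdef
  have hβ2 : β ^ 2 = (α : ℝ) := Real.sq_sqrt hpos.le
  have hαR : IsIntegral ℤ ((α : K) : ℝ) := hint.map (IsScalarTower.toAlgHom ℤ K ℝ)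
  have hβint : IsIntegral ℤ β := IsIntegral.of_pow two_pos (by rw [hβ2]; exact hαR)
  have hAR : IsIntegral ℤ ((A : F) : ℝ) := hA.map (IsScalarTower.toAlgHom ℤ F ℝ)
  have hBR : IsIntegral ℤ ((B : F) : ℝ) := hB.map (IsScalarTower.toAlgHom ℤ F ℝ)
  constructor
  · rintro ⟨C, hCint, hC | hC⟩
    · -- case C² = A + 2B
      refine ⟨?_, hβint⟩
      have key : (β ^ 2 + (B : ℝ)) ^ 2 = (C : ℝ) ^ 2 * β ^ 2 := by
        rw [hβ2]; linear_combination hroot - (α : ℝ) * hC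
      have hCne : (C : ℝ) ≠ 0 := by
        intro h0
        apply hnF
        have h1 : ((α : ℝ) + (B : ℝ)) ^ 2 = 0 := by
          rw [← hβ2]; rw [h0] at key; linarith [key]
        have h2 : (α : ℝ) = -(B : ℝ) := by
          have := pow_eq_zero_iff (n := 2) (by norm_num) |>.mp h1
          linarith
        rw [h2]
        exact F.neg_mem B.2
      have hfac : (β ^ 2 + (B : ℝ) - (C : ℝ) * β) * (β ^ 2 + (B : ℝ) + (C : ℝ) * β) = 0 := by
        linear_combination key
      rcases mul_eq_zero.mp hfac with h | h
      · have hb : β = ((α : ℝ) + (B : ℝ)) / (C : ℝ) := by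
          rw [eq_div_iff hCne, ← hβ2]; linarith
        rw [hb]
        exact K.div_mem (K.add_mem α.2 (hFK B.2)) (hFK C.2)
      · have hb : β = ((α : ℝ) + (B : ℝ)) / (-(C : ℝ)) := by
          rw [eq_div_iff (neg_ne_zero.mpr hCne), ← hβ2]; linarith
        rw [hb]
        exact K.div_mem (K.add_mem α.2 (hFK B.2)) (K.neg_mem (hFK C.2))
    · -- case C² = A - 2B
      refine ⟨?_, hβint⟩
      have key : (β ^ 2 - (B : ℝ)) ^ 2 = (C : ℝ) ^ 2 * β ^ 2 := by
        rw [hβ2]; linear_combination hroot - (α : ℝ) * hC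
      have hCne : (C : ℝ) ≠ 0 := by
        intro h0
        apply hnF
        have h1 : ((α : ℝ) - (B : ℝ)) ^ 2 = 0 := by
          rw [← hβ2]; rw [h0] at key; linarith [key]
        have h2 : (α : ℝ) = (B : ℝ) := by
          have := pow_eq_zero_iff (n := 2) (by norm_num) |>.mp h1
          linarith
        rw [h2]
        exact B.2
      have hfac : (β ^ 2 - (B : ℝ) - (C : ℝ) * β) * (β ^ 2 - (B : ℝ) + (C : ℝ) * β) = 0 := by
        linear_combination key
      rcases mul_eq_zero.mp hfac with h | h
      · have hb : β = ((α : ℝ) - (B : ℝ)) / (C : ℝ) := by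
          rw [eq_div_iff hCne, ← hβ2]; linarith
        rw [hb]
        exact K.div_mem (K.sub_mem α.2 (hFK B.2)) (hFK C.2)
      · have hb : β = ((α : ℝ) - (B : ℝ)) / (-(C : ℝ)) := by
          rw [eq_div_iff (neg_ne_zero.mpr hCne), ← hβ2]; linarith
        rw [hb]
        exact K.div_mem (K.sub_mem α.2 (hFK B.2)) (K.neg_mem (hFK C.2))
  · rintro ⟨hβK, -⟩
    -- decompose β = x + y t with x, y ∈ F
    have htInt : IsIntegral ℚ t := by
      refine ⟨Polynomial.X ^ 4 - Polynomial.C (d : ℚ),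
        Polynomial.monic_X_pow_sub_C _ (by norm_num), ?_⟩
      simp only [Polynomial.eval₂_sub, Polynomial.eval₂_pow, Polynomial.eval₂_X,
        Polynomial.eval₂_C, ht, eq_ratCast]
      push_cast
      ring
    have hβadj : β ∈ Algebra.adjoin ℚ ({t} : Set ℝ) := by
      rw [hK] at hβK
      rw [← IntermediateField.adjoin_simple_toSubalgebra_of_isAlgebraic htInt.isAlgebraic]
      exact hβK
    have hdecomp : ∃ x y : ℝ, x ∈ F ∧ y ∈ F ∧ β = x + y * t := by
      refine Algebra.adjoin_induction ?_ ?_ ?_ ?_ hβadj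
      · rintro s hs
        rw [Set.mem_singleton_iff] at hs
        exact ⟨0, 1, F.zero_mem, F.one_mem, by rw [hs]; ring⟩
      · intro r
        exact ⟨algebraMap ℚ ℝ r, 0, F.algebraMap_mem r, F.zero_mem, by ring⟩
      · rintro a b _ _ ⟨x, y, hx, hy, rfl⟩ ⟨x', y', hx', hy', rfl⟩
        exact ⟨x + x', y + y', F.add_mem hx hx', F.add_mem hy hy', by ring⟩
      · rintro a b _ _ ⟨x, y, hx, hy, rfl⟩ ⟨x', y', hx', hy', rfl⟩
        refine ⟨x * x' + y * y' * t ^ 2, x * y' + y * x', ?_, ?_, by ring⟩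
        · exact F.add_mem (F.mul_mem hx hx') (F.mul_mem (F.mul_mem hy hy') ht2F)
        · exact F.add_mem (F.mul_mem hx hy') (F.mul_mem hy hx')
    obtain ⟨x, y, hx, hy, hxy⟩ := hdecomp
    have hα : (α : ℝ) = (x + y * t) ^ 2 := by rw [← hβ2, hxy]
    have hroot' : (α : ℝ) ^ 2 - (2 * x ^ 2 + 2 * y ^ 2 * t ^ 2) * (α : ℝ)
        + (x ^ 2 - y ^ 2 * t ^ 2) ^ 2 = 0 := by
      rw [hα]; ring
    have hB'F : x ^ 2 - y ^ 2 * t ^ 2 ∈ F :=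
      F.sub_mem (pow_mem hx 2) (F.mul_mem (pow_mem hy 2) ht2F)
    have h2F : (2 : ℝ) ∈ F := by exact_mod_cast F.intCast_mem 2
    have hA'F : 2 * x ^ 2 + 2 * y ^ 2 * t ^ 2 ∈ F :=
      F.add_mem (F.mul_mem h2F (pow_mem hx 2))
        (F.mul_mem (F.mul_mem h2F (pow_mem hy 2)) ht2F)
    have hAeq : (A : ℝ) = 2 * x ^ 2 + 2 * y ^ 2 * t ^ 2 := by
      by_contra hne
      apply hnF
      have hα2 : (α : ℝ) = ((x ^ 2 - y ^ 2 * t ^ 2) ^ 2 - (B : ℝ) ^ 2)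
          / ((2 * x ^ 2 + 2 * y ^ 2 * t ^ 2) - (A : ℝ)) := by
        rw [eq_div_iff (sub_ne_zero.mpr (fun h => hne h.symm))]
        linear_combination hroot - hroot'
      rw [hα2]
      exact F.div_mem (F.sub_mem (pow_mem hB'F 2) (pow_mem B.2 2)) (F.sub_mem hA'F A.2)
    have hBsq : (B : ℝ) ^ 2 = (x ^ 2 - y ^ 2 * t ^ 2) ^ 2 := by
      linear_combination hroot - hroot' + (α : ℝ) * hAeq
    have hfac : ((B : ℝ) - (x ^ 2 - y ^ 2 * t ^ 2)) * ((B : ℝ) + (x ^ 2 - y ^ 2 * t ^ 2)) = 0 := by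
      linear_combination hBsq
    have hCcoe : ((((⟨x, hx⟩ + ⟨x, hx⟩ : F) : F) : F) : ℝ) = 2 * x := by push_cast; ring
    have hint2B : IsIntegral ℤ (2 * (B : ℝ)) := by
      rw [two_mul]; exact hBR.add hBR
    rcases mul_eq_zero.mp hfac with h | h
    · have hBeq : (B : ℝ) = x ^ 2 - y ^ 2 * t ^ 2 := by linarith [sub_eq_zero.mp h]
      have hCsq : ((((⟨x, hx⟩ + ⟨x, hx⟩ : F) : F) : F) : ℝ) ^ 2 = (A : ℝ) + 2 * (B : ℝ) := by
        rw [hCcoe]; linear_combination -hAeq - 2 * hBeq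
      refine ⟨(⟨x, hx⟩ + ⟨x, hx⟩ : F), ?_, Or.inl hCsq⟩
      have h1 : IsIntegral ℤ ((((⟨x, hx⟩ + ⟨x, hx⟩ : F) : F) : F) : ℝ) :=
        IsIntegral.of_pow two_pos (by rw [hCsq]; exact hAR.add hint2B)
      exact (isIntegral_algebraMap_iff (algebraMap F ℝ).injective).mp h1
    · have hBeq : (B : ℝ) = -(x ^ 2 - y ^ 2 * t ^ 2) := by linarith [h]
      have hCsq : ((((⟨x, hx⟩ + ⟨x, hx⟩ : F) : F) : F) : ℝ) ^ 2 = (A : ℝ) - 2 * (B : ℝ) := by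
        rw [hCcoe]; linear_combination -hAeq + 2 * hBeq
      refine ⟨(⟨x, hx⟩ + ⟨x, hx⟩ : F), ?_, Or.inr hCsq⟩
      have h1 : IsIntegral ℤ ((((⟨x, hx⟩ + ⟨x, hx⟩ : F) : F) : F) : ℝ) :=
        IsIntegral.of_pow two_pos (by rw [hCsq]; exact hAR.sub hint2B)
      exact (isIntegral_algebraMap_iff (algebraMap F ℝ).injective).mp h1
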